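/- Fix an integer d ≥ 1 and set ω = exp(2πi/d). For any vector a : ℤ/dℤ → ℂ and all i, k ∈ ℤ/dℤ, one has (1/d)·Σ_{j∈ℤ/dℤ} ω^{kj} · |⟨a|X^i Z^j|a⟩|² = Σ_{r∈ℤ/dℤ} conj(a_r)·conj(a_{r+k−i})·a_{r−i}·a_{r+k}; that is, the discrete Fourier transform in j of the squared overlaps |⟨a|X^iZ^j|a⟩|² equals G(i,k). -/

import Mathlib

open scoped BigOperators

/-- `ω = exp(2πi/d)`. -/
noncomputable def omeg (d : ℕ) : ℂ := Complex.exp (2 * Real.pi * Complex.I / d)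

lemma omeg_prim (d : ℕ) [NeZero d] : IsPrimitiveRoot (omeg d) d :=
  Complex.isPrimitiveRoot_exp d (NeZero.ne d)

lemma omeg_pow_mod (d : ℕ) [NeZero d] (n : ℕ) : omeg d ^ (n % d) = omeg d ^ n := by
  conv_rhs => rw [← Nat.div_add_mod n d]
  rw [pow_add, pow_mul, (omeg_prim d).pow_eq_one, one_pow, one_mul]

noncomputable def e (d : ℕ) [NeZero d] (x : ZMod d) : ℂ := omeg d ^ x.val

lemma e_add (d : ℕ) [NeZero d] (x y : ZMod d) : e d (x + y) = e d x * e d y := by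
  rw [e, e, e, ← pow_add, ZMod.val_add, omeg_pow_mod]

lemma e_zero (d : ℕ) [NeZero d] : e d 0 = 1 := by simp [e, ZMod.val_zero]

lemma e_ne_zero (d : ℕ) [NeZero d] (x : ZMod d) : e d x ≠ 0 := by
  have h : e d x * e d (-x) = 1 := by rw [← e_add]; simp [e_zero]
  intro h0; rw [h0, zero_mul] at h; simp at h

lemma e_conj (d : ℕ) [NeZero d] (x : ZMod d) : (starRingEnd ℂ) (e d x) = e d (-x) := by
  have habs : ‖omeg d‖ = 1 := by
    have : omeg d = Complex.exp ((2 * Real.pi / d : ℝ) * Complex.I) := by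
      rw [omeg]; push_cast; ring_nf
    rw [this, Complex.norm_exp_ofReal_mul_I]
  have h1 : (starRingEnd ℂ) (e d x) * e d x = 1 := by
    rw [e, map_pow, ← mul_pow]
    have h0 : (starRingEnd ℂ) (omeg d) * omeg d = 1 := by
      rw [mul_comm, Complex.mul_conj, Complex.normSq_eq_norm_sq, habs]; norm_num
    rw [h0, one_pow]
  have h2 : e d (-x) * e d x = 1 := by rw [← e_add]; simp [e_zero]
  exact mul_right_cancel₀ (e_ne_zero d x) (h1.trans h2.symm)

lemma sum_zmod_val {M : Type*} [AddCommMonoid M] (d : ℕ) [NeZero d] (f : ℕ → M) :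
    ∑ j : ZMod d, f j.val = ∑ n ∈ Finset.range d, f n := by
  refine Finset.sum_nbij' (fun j => j.val) (fun n => (n : ZMod d)) ?_ ?_ ?_ ?_ ?_ <;>
    simp +contextual [ZMod.val_lt, ZMod.val_cast_of_lt, ZMod.natCast_val, ZMod.val_natCast,
      Nat.mod_eq_of_lt]

lemma sum_e_mul (d : ℕ) [NeZero d] (m : ZMod d) :
    ∑ j : ZMod d, e d (m * j) = if m = 0 then (d : ℂ) else 0 := by
  have key : ∀ j : ZMod d, e d (m * j) = (omeg d ^ m.val) ^ j.val := by
    intro j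
    rw [e, ZMod.val_mul, omeg_pow_mod, pow_mul]
  simp_rw [key]
  rw [sum_zmod_val d (fun n => (omeg d ^ m.val) ^ n)]
  split_ifs with hm
  · simp [hm, ZMod.val_zero]
  · have hne : omeg d ^ m.val ≠ 1 := by
      apply (omeg_prim d).pow_ne_one_of_pos_of_lt ?_ (ZMod.val_lt m)
      exact (fun (h : m.val = 0) => hm (by simpa using congrArg (Nat.cast : ℕ → ZMod d) h))
    rw [geom_sum_eq hne, ← pow_mul, mul_comm, pow_mul, (omeg_prim d).pow_eq_one, one_pow,
      sub_self, zero_div]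


/-- The shift matrix `X`, with entries `X_{r,s} = δ_{r,s+1}`. -/
def Xmat (d : ℕ) : Matrix (ZMod d) (ZMod d) ℂ :=
  fun r s => if r = s + 1 then 1 else 0

/-- The clock matrix `Z`, with entries `Z_{r,s} = ω^r δ_{r,s}`. -/
noncomputable def Zmat (d : ℕ) : Matrix (ZMod d) (ZMod d) ℂ :=
  fun r s => if r = s then omeg d ^ r.val else 0

/-- `⟨a|M|a⟩ = Σ_{r,s} conj(a_r)·M_{r,s}·a_s`. -/
noncomputable def overlap (d : ℕ) [NeZero d] (a : ZMod d → ℂ)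
    (M : Matrix (ZMod d) (ZMod d) ℂ) : ℂ :=
  ∑ r : ZMod d, ∑ s : ZMod d, (starRingEnd ℂ) (a r) * M r s * a s

lemma Xpow (d : ℕ) [NeZero d] (m : ℕ) (r s : ZMod d) :
    (Xmat d ^ m) r s = if r = s + m then 1 else 0 := by
  induction m generalizing r s with
  | zero => simp [Matrix.one_apply, eq_comm]
  | succ n ih =>
    rw [pow_succ, Matrix.mul_apply]
    simp only [ih, Xmat, ite_mul, one_mul, zero_mul, mul_ite, mul_one, mul_zero]
    rw [Finset.sum_eq_single (s + 1)]
    · have : s + 1 + (n : ZMod d) = s + ((n : ℕ) + 1 : ℕ) := by push_cast; ring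
      simp [this]
    · intro t _ ht; simp [ht]
    · simp

lemma Zpow (d : ℕ) [NeZero d] (m : ℕ) (r s : ZMod d) :
    (Zmat d ^ m) r s = if r = s then omeg d ^ (r.val * m) else 0 := by
  induction m generalizing r s with
  | zero => simp [Matrix.one_apply]
  | succ n ih =>
    rw [pow_succ, Matrix.mul_apply]
    simp_rw [ih, Zmat, ite_mul, zero_mul, mul_ite, mul_zero]
    rw [Finset.sum_eq_single r]
    · by_cases h : r = s <;> simp [h, pow_succ, pow_mul, mul_comm, mul_pow]
    · intro t _ ht; simp [Ne.symm ht]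
    · simp

lemma overlap_eq (d : ℕ) [NeZero d] (a : ZMod d → ℂ) (i j : ZMod d) :
    overlap d a (Xmat d ^ i.val * Zmat d ^ j.val)
      = ∑ s : ZMod d, (starRingEnd ℂ) (a (s + i)) * e d (s * j) * a s := by
  have hM : ∀ r s : ZMod d, (Xmat d ^ i.val * Zmat d ^ j.val) r s
      = if r = s + i then e d (s * j) else 0 := by
    intro r s
    rw [Matrix.mul_apply]
    simp_rw [Xpow, Zpow, ite_mul, zero_mul, mul_ite, mul_zero]
    rw [Finset.sum_eq_single s]
    · have hv : ((i.val : ZMod d)) = i := ZMod.natCast_rightInverse i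
      have he : e d (s * j) = omeg d ^ (s.val * j.val) := by
        rw [e, ZMod.val_mul, omeg_pow_mod]
      simp [hv, he]
    · intro t _ ht; simp [ht]
    · simp
  rw [overlap]
  rw [Finset.sum_comm]
  refine Finset.sum_congr rfl fun s _ => ?_
  simp_rw [hM]
  rw [Finset.sum_eq_single (s + i)]
  · simp
  · intro t _ ht; simp [ht]
  · simp


/-- `G(i,k) = Σ_r conj(a_r)·conj(a_{r+k−i})·a_{r−i}·a_{r+k}`. -/
noncomputable def Gfun (d : ℕ) [NeZero d] (a : ZMod d → ℂ) (i k : ZMod d) : ℂ :=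
  ∑ r : ZMod d,
    (starRingEnd ℂ) (a r) * (starRingEnd ℂ) (a (r + k - i)) * a (r - i) * a (r + k)

/-- For `d ≥ 1`, any `a : ℤ/dℤ → ℂ` and `i, k ∈ ℤ/dℤ`:
`(1/d)·Σ_j ω^{kj}·|⟨a|X^i Z^j|a⟩|² = G(i,k)`. -/
theorem stmt_14 (d : ℕ) [NeZero d] (a : ZMod d → ℂ) (i k : ZMod d) :
    (1 / (d : ℂ)) * ∑ j : ZMod d, omeg d ^ (k * j).val *
        ((‖overlap d a (Xmat d ^ i.val * Zmat d ^ j.val)‖ : ℝ) : ℂ) ^ 2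
      = Gfun d a i k := by
  have hd : (d : ℂ) ≠ 0 := Nat.cast_ne_zero.mpr (NeZero.ne d)
  set X : ZMod d → ℂ := fun s => (starRingEnd ℂ) (a (s + i)) * a s with hX
  set Y : ZMod d → ℂ := fun t => a (t + i) * (starRingEnd ℂ) (a t) with hY
  have habs : ∀ z : ℂ, (((‖z‖ : ℝ)) : ℂ) ^ 2 = z * (starRingEnd ℂ) z := by
    intro z
    rw [← Complex.ofReal_pow, Complex.sq_norm, Complex.mul_conj]
  have hBc : ∀ j : ZMod d, (starRingEnd ℂ) (overlap d a (Xmat d ^ i.val * Zmat d ^ j.val))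
      = ∑ t : ZMod d, a (t + i) * e d (-(t * j)) * (starRingEnd ℂ) (a t) := by
    intro j
    rw [overlap_eq, map_sum]
    refine Finset.sum_congr rfl fun t _ => ?_
    rw [map_mul, map_mul, e_conj, Complex.conj_conj]
  have expand : ∀ j : ZMod d, omeg d ^ (k * j).val *
      (((‖overlap d a (Xmat d ^ i.val * Zmat d ^ j.val)‖ : ℝ) : ℂ) ^ 2)
      = ∑ s : ZMod d, ∑ t : ZMod d, (X s * Y t) * e d ((k + s - t) * j) := by
    intro j
    rw [habs, hBc, overlap_eq, Finset.sum_mul_sum, Finset.mul_sum]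
    refine Finset.sum_congr rfl fun s _ => ?_
    rw [Finset.mul_sum]
    refine Finset.sum_congr rfl fun t _ => ?_
    have h1 : (k + s - t) * j = k * j + (s * j + -(t * j)) := by ring
    have h2 : omeg d ^ (k * j).val = e d (k * j) := rfl
    rw [h1, e_add, e_add, h2, hX, hY]
    ring
  rw [Finset.sum_congr rfl (fun j _ => expand j)]
  rw [Finset.sum_comm]
  have inner : ∀ s : ZMod d, (∑ j : ZMod d, ∑ t : ZMod d, (X s * Y t) * e d ((k + s - t) * j))
      = (d : ℂ) * (X s * Y (k + s)) := by
    intro s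
    rw [Finset.sum_comm]
    have : ∀ t : ZMod d, (∑ j : ZMod d, (X s * Y t) * e d ((k + s - t) * j))
        = if k + s = t then (X s * Y t) * d else 0 := by
      intro t
      rw [← Finset.mul_sum, sum_e_mul]
      simp_rw [sub_eq_zero]
      split_ifs with h <;> simp
    simp_rw [this]
    rw [Finset.sum_ite_eq]
    simp [mul_comm]
  rw [Finset.sum_congr rfl (fun s _ => inner s), ← Finset.mul_sum, ← mul_assoc,
    one_div, inv_mul_cancel₀ hd, one_mul, Gfun]
  refine Fintype.sum_equiv (Equiv.addRight i) _ _ fun s => ?_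
  have h1 : s + i + k - i = s + k := by ring
  have h2 : s + i - i = s := by ring
  have h3 : s + i + k = k + s + i := by ring
  simp only [Equiv.coe_addRight, h1, h2, h3, hX, hY]
  ring
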